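/- The prime elements of ℤ[k] are exactly ε and −ε; that is, z ∈ ℤ[k] is prime if and only if z = ε or z = −ε. -/

import Mathlib

open DualNumber TrivSqZeroExt

lemma eps_dvd_iff (w : DualNumber ℤ) : ε ∣ w ↔ w.fst = 0 := by
  constructor
  · rintro ⟨c, rfl⟩
    simp [fst_mul]
  · intro h
    exact ⟨inl w.snd, by ext <;> simp [h]⟩

lemma prime_eps : Prime (ε : DualNumber ℤ) := by
  refine ⟨by simp [ne_eq, TrivSqZeroExt.ext_iff], ?_, ?_⟩
  · simp [isUnit_iff_isUnit_fst]
  · intro x y h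
    simp only [eps_dvd_iff] at h ⊢
    rwa [fst_mul, mul_eq_zero] at h
    

theorem prime_iff_eps_or_neg_eps (z : DualNumber ℤ) :
    Prime z ↔ z = ε ∨ z = -ε := by
  constructor
  · intro hz
    have hd : z ∣ ε := by
      rcases hz.2.2 ε ε (by simp [eps_mul_eps]) with h | h <;> exact h
    obtain ⟨c, hc⟩ := hd
    have h1 : (1 : ℤ) = z.fst * c.snd + z.snd * c.fst := by
      have := congrArg TrivSqZeroExt.snd hc
      simpa [DualNumber.snd_mul, mul_comm] using this
    have h0 : z.fst * c.fst = 0 := by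
      have := congrArg TrivSqZeroExt.fst hc
      simpa [fst_mul] using this
    rcases mul_eq_zero.mp h0 with hz0 | hc0
    · -- z = z.snd • ε, and z.snd * c.fst = 1
      rw [hz0, zero_mul, zero_add] at h1
      have : z.snd = 1 ∨ z.snd = -1 := Int.isUnit_iff.mp (IsUnit.of_mul_eq_one _ h1.symm)
      rcases this with h | h
      · left; ext <;> simp [hz0, h]
      · right; ext <;> simp [hz0, h]
    · rw [hc0, mul_zero, add_zero] at h1
      exfalso
      exact hz.2.1 (by
        rw [isUnit_iff_isUnit_fst]
        exact IsUnit.of_mul_eq_one _ h1.symm)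
  · rintro (rfl | rfl)
    · exact prime_eps
    · exact prime_eps.neg
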